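/- Let M be a matroid with lattice of flats L, and define the Poincaré polynomial P̄_M(q) = ∑_{F ∈ N°(M)} χ̄_{M_F}(q)/(q−1)^{#F}. Then P̄_M(q) = χ̄_M(q) + ∑_{F ∈ L̂} χ̄_{M/F}(q)·P̄_{M|F}(q), where L̂ = L \ {cl(∅), E}. -/

import Mathlib

open Polynomial

namespace MatroidZeta

open scoped Classical

variable {α : Type*}

/-- The `q`-analogue `[n]_q = 1 + q + ⋯ + q^(n-1)` of a natural number `n`, in `ℤ[q]`. -/
noncomputable def qAnalogue (n : ℕ) : Polynomial ℤ := ∑ i ∈ Finset.range n, X ^ i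

/-- The rank of a set `X` in a matroid `M`: the largest size of an independent subset of `X`. -/
noncomputable def rk (M : Matroid α) (X : Set α) : ℕ :=
  sSup {n | ∃ I, M.Indep I ∧ I ⊆ X ∧ I.ncard = n}

/-- Contraction `M / C` of a matroid, defined as the dual of the deletion of `C`
from the dual matroid. -/
noncomputable def contract (M : Matroid α) (C : Set α) : Matroid α :=
  ((M✶.restrict (M✶.E \ C))✶)

/-- A matroid is loopless if no element of the ground set lies in the closure of `∅`. -/
def Loopless (M : Matroid α) : Prop := M.closure ∅ = ∅

/-- The characteristic polynomial `χ_M(q) = ∑_{S ⊆ E} (-1)^{#S} q^(rk M - rk S)`. -/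
noncomputable def charPoly (M : Matroid α) : Polynomial ℤ :=
  ∑ᶠ S ∈ {S : Set α | S ⊆ M.E}, (-1 : ℤ) ^ S.ncard • (X : Polynomial ℤ) ^ (rk M M.E - rk M S)

/-- The reduced characteristic polynomial
`χ̄_M(q) = χ_M(q)/(q-1) = ∑_{S ⊆ E} (-1)^{#S} [rk M - rk S]_q`. -/
noncomputable def redCharPoly (M : Matroid α) : Polynomial ℤ :=
  ∑ᶠ S ∈ {S : Set α | S ⊆ M.E}, (-1 : ℤ) ^ S.ncard • qAnalogue (rk M M.E - rk M S)

/-- `wt_M(w) = max_{B basis of M} ∑_{e ∈ B} w e`. -/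
noncomputable def wt (M : Matroid α) (w : α → ℝ) : ℝ :=
  sSup {x | ∃ B, M.IsBase B ∧ x = ∑ᶠ e ∈ B, w e}

/-- The initial matroid `M_w`: the matroid on the ground set of `M` whose bases are the
bases of `M` of maximal `w`-weight.  (Such a matroid exists and is unique.) -/
noncomputable def initialMatroid (M : Matroid α) (w : α → ℝ) : Matroid α :=
  if h : ∃ N : Matroid α, N.E = M.E ∧
      ∀ B, N.IsBase B ↔ M.IsBase B ∧ ∑ᶠ e ∈ B, w e = wt M w
  then h.choose else M

/-- A flag of non-minimal flats of `M`: a chain of flats strictly above `cl(∅)`. -/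
def IsFlag (M : Matroid α) (C : Finset (Set α)) : Prop :=
  (∀ F ∈ C, M.IsFlat F ∧ M.closure ∅ ⊂ F) ∧ IsChain (· ⊆ ·) (C : Set (Set α))

/-- `N(M)`: the set of flags of non-minimal flats of `M`. -/
def flags (M : Matroid α) : Set (Finset (Set α)) := {C | IsFlag M C}

/-- `N°(M)`: flags not containing the ground set. -/
def flagsCirc (M : Matroid α) : Set (Finset (Set α)) := {C | IsFlag M C ∧ M.E ∉ C}

/-- `N*(M)`: flags containing the ground set. -/
def flagsStar (M : Matroid α) : Set (Finset (Set α)) := {C | IsFlag M C ∧ M.E ∈ C}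

/-- `z_C(F)`: the largest member of the chain `C` strictly below `F` (or `∅` if none). -/
def zmin (C : Finset (Set α)) (F : Set α) : Set α := ⋃₀ {G | G ∈ C ∧ G ⊂ F}

/-- The weight vector `∑_{F ∈ C} v_F`, a point in the relative interior of the cone `σ_C`. -/
noncomputable def flagWeight (C : Finset (Set α)) : α → ℝ :=
  fun e => ∑ F ∈ C, if e ∈ F then (1 : ℝ) else 0

/-- The initial matroid `M_C` of a flag `C`. -/
noncomputable def flagMatroid (M : Matroid α) (C : Finset (Set α)) : Matroid α :=
  initialMatroid M (flagWeight C)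


/-- The Poincaré polynomial `P̄_M(q) = ∑_{C ∈ N°(M)} χ̄_{M_C}(q)/(q-1)^{#C}`
(the divisions are exact; they are implemented by division by the monic `(q-1)^{#C}`). -/
noncomputable def Pbar (M : Matroid α) : Polynomial ℤ :=
  ∑ᶠ C ∈ flagsCirc M, redCharPoly (flagMatroid M C) /ₘ ((X - 1) ^ C.card)

section Rank

variable {M : Matroid α} {I J X B : Set α}

lemma bddAbove_rkSet (hE : M.E.Finite) (X : Set α) :
    BddAbove {n | ∃ I, M.Indep I ∧ I ⊆ X ∧ I.ncard = n} := by
  refine ⟨M.E.ncard, ?_⟩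
  rintro n ⟨I, hI, -, rfl⟩
  exact Set.ncard_le_ncard hI.subset_ground hE

lemma rk_eq_of_basis' (hE : M.E.Finite) (hIX : M.IsBasis' I X) : rk M X = I.ncard := by
  have hIfin : I.Finite := hE.subset hIX.indep.subset_ground
  refine le_antisymm (csSup_le ⟨I.ncard, I, hIX.indep, hIX.subset, rfl⟩ ?_)
    (le_csSup (bddAbove_rkSet hE X) ⟨I, hIX.indep, hIX.subset, rfl⟩)
  rintro n ⟨J, hJ, hJX, rfl⟩
  obtain ⟨J', hJ', hJJ'⟩ := hJ.subset_isBasis'_of_subset hJX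
  have h1 : J'.encard = I.encard := hJ'.encard_eq_encard hIX
  have hJ'fin : J'.Finite := hE.subset hJ'.indep.subset_ground
  have h2 : J'.ncard = I.ncard := by
    rw [Set.ncard_def, Set.ncard_def, h1]
  exact (Set.ncard_le_ncard hJJ' hJ'fin).trans h2.le

lemma rk_eq_of_basis (hE : M.E.Finite) (hIX : M.IsBasis I X) : rk M X = I.ncard :=
  rk_eq_of_basis' hE hIX.isBasis'

lemma rk_ground_eq_of_base (hE : M.E.Finite) (hB : M.IsBase B) : rk M M.E = B.ncard :=
  rk_eq_of_basis hE hB.isBasis_ground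

lemma ncard_le_rk (hE : M.E.Finite) (hI : M.Indep I) (hIX : I ⊆ X) : I.ncard ≤ rk M X :=
  le_csSup (bddAbove_rkSet hE X) ⟨I, hI, hIX, rfl⟩

lemma rk_le_rk_ground (hE : M.E.Finite) (X : Set α) : rk M X ≤ rk M M.E := by
  obtain ⟨I, hI⟩ := M.exists_isBasis' X
  obtain ⟨B, hB, hIB⟩ := hI.indep.exists_isBase_superset
  rw [rk_eq_of_basis' hE hI, rk_ground_eq_of_base hE hB]
  exact Set.ncard_le_ncard hIB (hE.subset hB.subset_ground)

lemma basis_of_ncard_eq_rk (hE : M.E.Finite) (hI : M.Indep I) (hIX : I ⊆ X)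
    (hX : X ⊆ M.E) (h : I.ncard = rk M X) : M.IsBasis I X := by
  obtain ⟨J, hJ, hIJ⟩ := hI.subset_isBasis_of_subset hIX hX
  have : I = J := by
    refine Set.eq_of_subset_of_ncard_le hIJ ?_ (hE.subset hJ.indep.subset_ground)
    rw [rk_eq_of_basis hE hJ] at h; omega
  exact this ▸ hJ

end Rank

section Chain

variable {C : Finset (Set α)} {F : Set α}

lemma exists_max_of_chain (hC : IsChain (· ⊆ ·) (C : Set (Set α))) (hne : C.Nonempty) :
    ∃ F ∈ C, ∀ G ∈ C, G ⊆ F := by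
  obtain ⟨F, hF, hmax⟩ := Set.Finite.exists_maximalFor id _ C.finite_toSet
    (by simpa using hne)
  refine ⟨F, by simpa using hF, fun G hG => ?_⟩
  rcases eq_or_ne G F with rfl | hne'
  · exact subset_rfl
  · rcases hC (by simpa using hG) (by simpa using hF) hne' with h | h
    · exact h
    · exact hmax (by simpa using hG) h

lemma sUnion_eq_max (hF : F ∈ C) (hmax : ∀ G ∈ C, G ⊆ F) : ⋃₀ (C : Set (Set α)) = F := by
  apply subset_antisymm
  · exact Set.sUnion_subset fun G hG => hmax G (by simpa using hG)
  · exact Set.subset_sUnion_of_mem (by simpa using hF)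

end Chain

section Weight

variable {M : Matroid α} {C : Finset (Set α)} {B F G : Set α}

lemma flagWeight_finsum (hB : B.Finite) (C : Finset (Set α)) :
    ∑ᶠ e ∈ B, flagWeight C e = ∑ G ∈ C, ((B ∩ G).ncard : ℝ) := by
  rw [← hB.coe_toFinset, finsum_mem_coe_finset]
  unfold flagWeight
  rw [Finset.sum_comm]
  refine Finset.sum_congr rfl fun G _ => ?_
  rw [Finset.sum_boole]
  congr 1
  rw [← Set.ncard_coe_finset]
  congr 1
  ext x
  simp [and_comm]

lemma exists_goodBase : ∀ (n : ℕ) (M : Matroid α), M.E.Finite → ∀ C : Finset (Set α),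
    C.card = n → (∀ G ∈ C, G ⊆ M.E) → IsChain (· ⊆ ·) (C : Set (Set α)) →
    ∃ B, M.IsBase B ∧ ∀ G ∈ C, M.IsBasis (B ∩ G) G := by
  intro n
  induction n with
  | zero =>
    intro M hE C hcard _ _
    obtain ⟨B, hB⟩ := M.exists_isBase
    rw [Finset.card_eq_zero] at hcard
    subst hcard
    exact ⟨B, hB, by simp⟩
  | succ n IH =>
    intro M hE C hcard hsub hchain
    have hne : C.Nonempty := Finset.card_pos.mp (by omega)
    obtain ⟨F, hF, hmax⟩ := exists_max_of_chain hchain hne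
    have hFE : F ⊆ M.E := hsub F hF
    obtain ⟨B₀, hB₀, hB₀G⟩ := IH (M.restrict F) (hE.subset hFE) (C.erase F)
      (by rw [Finset.card_erase_of_mem hF, hcard]; rfl)
      (fun G hG => (hmax G (Finset.mem_of_mem_erase hG)).trans_eq rfl)
      (hchain.mono (by simp only [Finset.coe_erase]; exact Set.diff_subset))
    rw [Matroid.isBase_restrict_iff hFE] at hB₀
    obtain ⟨B, hB, hB₀B⟩ := hB₀.indep.exists_isBase_superset
    have hBF : B ∩ F = B₀ :=
      (hB₀.eq_of_subset_indep (hB.indep.inter_right F)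
        (Set.subset_inter hB₀B hB₀.subset) Set.inter_subset_right).symm
    refine ⟨B, hB, fun G hG => ?_⟩
    rcases eq_or_ne G F with rfl | hne'
    · rw [hBF]; exact hB₀
    · have hGF : G ⊆ F := hmax G hG
      have h2 := hB₀G G (Finset.mem_erase.mpr ⟨hne', hG⟩)
      rw [Matroid.isBasis_restrict_iff hFE] at h2
      have h3 : B ∩ G = B₀ ∩ G := by
        rw [← hBF, Set.inter_assoc, Set.inter_eq_self_of_subset_right hGF]
      rw [h3]
      exact h2.1

lemma wt_flagWeight_eq (hE : M.E.Finite) (hsub : ∀ G ∈ C, G ⊆ M.E)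
    (hchain : IsChain (· ⊆ ·) (C : Set (Set α))) :
    wt M (flagWeight C) = ∑ G ∈ C, (rk M G : ℝ) := by
  obtain ⟨B₀, hB₀, hgood⟩ := exists_goodBase C.card M hE C rfl hsub hchain
  have hub : ∀ x ∈ {x | ∃ B, M.IsBase B ∧ x = ∑ᶠ e ∈ B, flagWeight C e},
      x ≤ ∑ G ∈ C, (rk M G : ℝ) := by
    rintro x ⟨B, hB, rfl⟩
    rw [flagWeight_finsum (hE.subset hB.subset_ground)]
    refine Finset.sum_le_sum fun G hG => ?_
    exact_mod_cast ncard_le_rk hE (hB.indep.inter_right G) Set.inter_subset_right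
  have hmem : (∑ G ∈ C, (rk M G : ℝ)) ∈
      {x | ∃ B, M.IsBase B ∧ x = ∑ᶠ e ∈ B, flagWeight C e} := by
    refine ⟨B₀, hB₀, ?_⟩
    rw [flagWeight_finsum (hE.subset hB₀.subset_ground)]
    refine Finset.sum_congr rfl fun G hG => ?_
    rw [rk_eq_of_basis hE (hgood G hG)]
  exact le_antisymm (csSup_le ⟨_, hmem⟩ hub) (le_csSup ⟨_, hub⟩ hmem)

lemma base_maxweight_iff (hE : M.E.Finite) (hsub : ∀ G ∈ C, G ⊆ M.E)
    (hchain : IsChain (· ⊆ ·) (C : Set (Set α))) (hB : M.IsBase B) :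
    (∑ᶠ e ∈ B, flagWeight C e = wt M (flagWeight C)) ↔ ∀ G ∈ C, M.IsBasis (B ∩ G) G := by
  rw [flagWeight_finsum (hE.subset hB.subset_ground), wt_flagWeight_eq hE hsub hchain]
  have hle : ∀ G ∈ C, (B ∩ G).ncard ≤ rk M G := fun G _ =>
    ncard_le_rk hE (hB.indep.inter_right G) Set.inter_subset_right
  constructor
  · intro h
    have h' : ∑ G ∈ C, (B ∩ G).ncard = ∑ G ∈ C, rk M G := by exact_mod_cast h
    have h'' := (Finset.sum_eq_sum_iff_of_le hle).mp h'
    intro G hG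
    exact basis_of_ncard_eq_rk hE (hB.indep.inter_right G) Set.inter_subset_right
      (hsub G hG) (h'' G hG)
  · intro h
    refine Finset.sum_congr rfl fun G hG => ?_
    rw [rk_eq_of_basis hE (h G hG)]

end Weight

section Contract

variable {M : Matroid α} {B B₀ I F : Set α}

@[simp] lemma contract_ground (M : Matroid α) (F : Set α) : (contract M F).E = M.E \ F := rfl

/-- Replacing the `F`-part of a base by another basis of `F` gives a base. -/
lemma base_diff_union_basis (hE : M.E.Finite) (hB₀ : M.IsBase B₀) (hB₀F : M.IsBasis (B₀ ∩ F) F)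
    (hI : M.IsBasis I F) : M.IsBase ((B₀ \ F) ∪ I) := by
  have hFE : F ⊆ M.E := hI.subset_ground
  have hSE : (B₀ \ F) ∪ I ⊆ M.E :=
    Set.union_subset ((Set.diff_subset).trans hB₀.subset_ground) hI.indep.subset_ground
  have hsp : M.Spanning ((B₀ \ F) ∪ I) := by
    rw [Matroid.spanning_iff_ground_subset_closure hSE]
    have h1 : B₀ ⊆ M.closure ((B₀ \ F) ∪ I) := by
      intro x hx
      by_cases hxF : x ∈ F
      · have : F ⊆ M.closure I := hI.subset_closure
        exact M.closure_subset_closure Set.subset_union_right (this hxF)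
      · exact M.subset_closure _ hSE (Or.inl ⟨hx, hxF⟩)
    calc M.E = M.closure B₀ := hB₀.closure_eq.symm
      _ ⊆ M.closure ((B₀ \ F) ∪ I) := M.closure_subset_closure_of_subset_closure h1
  obtain ⟨B₁, hB₁, hB₁S⟩ := hsp.exists_isBase_subset
  have hcard : ((B₀ \ F) ∪ I).ncard ≤ B₁.ncard := by
    have e1 : I.ncard = (B₀ ∩ F).ncard := by
      rw [Set.ncard_def, Set.ncard_def, hI.encard_eq_encard hB₀F]
    have e2 : (B₀ \ F).ncard + (B₀ ∩ F).ncard = B₀.ncard := by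
      have hdisj : Disjoint (B₀ \ F) (B₀ ∩ F) :=
        Set.disjoint_left.mpr fun x hx hx2 => hx.2 hx2.2
      rw [← Set.ncard_union_eq hdisj
          (hE.subset ((Set.diff_subset (s := B₀) (t := F)).trans hB₀.subset_ground))
          (hE.subset ((Set.inter_subset_left (s := B₀) (t := F)).trans hB₀.subset_ground)),
        Set.diff_union_inter]
    have e3 : B₁.ncard = B₀.ncard := hB₁.ncard_eq_ncard_of_isBase hB₀
    calc ((B₀ \ F) ∪ I).ncard ≤ (B₀ \ F).ncard + I.ncard :=
          Set.ncard_union_le _ _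
      _ = B₀.ncard := by rw [e1, e2]
      _ = B₁.ncard := e3.symm
  have : B₁ = (B₀ \ F) ∪ I := Set.eq_of_subset_of_ncard_le hB₁S hcard (hE.subset hSE)
  exact this ▸ hB₁

lemma contract_base_iff (hE : M.E.Finite) (hFE : F ⊆ M.E) (hBE : B ⊆ M.E)
    (hBF : M.IsBasis (B ∩ F) F) : M.IsBase B ↔ (contract M F).IsBase (B \ F) := by
  have hgr : (M✶.restrict (M✶.E \ F)).E = M.E \ F := rfl
  have hKeq : (M.E \ F) \ (B \ F) = (M.E \ B) ∩ (M.E \ F) := by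
    ext x; by_cases hx : x ∈ B <;> simp [hx]
  rw [contract, Matroid.dual_isBase_iff']
  simp only [Matroid.restrict_ground_eq, Matroid.dual_ground]
  rw [Matroid.isBase_restrict_iff',
    Matroid.isBasis'_iff_isBasis (show M.E \ F ⊆ M✶.E from Set.diff_subset), hKeq]
  constructor
  · intro hB
    refine ⟨(hB.inter_isBasis_iff_compl_inter_isBasis_dual hFE).mp hBF, ?_⟩
    exact Set.diff_subset_diff_left hBE
  · rintro ⟨hK, -⟩
    obtain ⟨D, hD, hKD⟩ := hK.indep.exists_isBase_superset
    have hDK : D ∩ (M.E \ F) = (M.E \ B) ∩ (M.E \ F) := by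
      refine (hK.eq_of_subset_indep (hD.indep.inter_right _) ?_ Set.inter_subset_right).symm
      exact Set.subset_inter hKD (Set.inter_subset_right)
    have hDbasis : M✶.IsBasis (D ∩ (M.E \ F)) (M.E \ F) := hDK ▸ hK
    have hcompl : M.IsBasis ((M.E \ D) ∩ F) F := by
      have h2 := (hD.inter_isBasis_iff_compl_inter_isBasis_dual
        (X := M.E \ F) Set.diff_subset).mp hDbasis
      simpa [Matroid.dual_dual, Matroid.dual_ground,
        Set.diff_diff_cancel_left hFE] using h2
    have hbase : M.IsBase (M.E \ D) := hD.compl_isBase_of_dual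
    have hfinal := base_diff_union_basis hE hbase hcompl hBF
    have heq : ((M.E \ D) \ F) ∪ (B ∩ F) = B := by
      have hpt : ∀ x, x ∈ M.E → x ∉ F → (x ∈ D ↔ x ∉ B) := by
        intro x hxE hxF
        constructor
        · intro hxD hxB
          have h5 : x ∈ (M.E \ B) ∩ (M.E \ F) := hDK ▸ Set.mem_inter hxD ⟨hxE, hxF⟩
          exact h5.1.2 hxB
        · intro hxB
          have h5 : x ∈ D ∩ (M.E \ F) := hDK.symm ▸ Set.mem_inter ⟨hxE, hxB⟩ ⟨hxE, hxF⟩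
          exact h5.1
      have hx : (M.E \ D) \ F = B \ F := by
        ext x
        constructor
        · rintro ⟨⟨hxE, hxD⟩, hxF⟩
          have hxB : x ∈ B := by
            by_contra h
            exact hxD ((hpt x hxE hxF).mpr h)
          exact ⟨hxB, hxF⟩
        · rintro ⟨hxB, hxF⟩
          have hxE : x ∈ M.E := hBE hxB
          exact ⟨⟨hxE, fun hxD => ((hpt x hxE hxF).mp hxD) hxB⟩, hxF⟩
      rw [hx, Set.diff_union_inter]
    rwa [heq] at hfinal

end Contract

section Flags

variable {M : Matroid α} {C C' : Finset (Set α)} {B F G : Set α}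

lemma initialMatroid_eq (w : α → ℝ) (N : Matroid α) (hN1 : N.E = M.E)
    (hN2 : ∀ B, N.IsBase B ↔ M.IsBase B ∧ ∑ᶠ e ∈ B, w e = wt M w) :
    initialMatroid M w = N := by
  have hex : ∃ N' : Matroid α, N'.E = M.E ∧
      ∀ B, N'.IsBase B ↔ M.IsBase B ∧ ∑ᶠ e ∈ B, w e = wt M w := ⟨N, hN1, hN2⟩
  rw [initialMatroid, dif_pos hex]
  exact Matroid.ext_isBase (hex.choose_spec.1.trans hN1.symm)
    (fun ⦃B⦄ _ => (hex.choose_spec.2 B).trans (hN2 B).symm)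

lemma comb (hE : M.E.Finite) (hF : F ∈ C) (hmax : ∀ G ∈ C, G ⊆ F) (hFE : F ⊆ M.E)
    (B : Set α) :
    (M.IsBase B ∧ ∀ G ∈ C, M.IsBasis (B ∩ G) G) ↔
      ((M.IsBasis (B ∩ F) F ∧ ∀ G ∈ C.erase F, M.IsBasis (B ∩ G) G) ∧
        (contract M F).IsBase (B ∩ (M.E \ F)) ∧ B ⊆ M.E) := by
  have hBiF : ∀ B : Set α, B ⊆ M.E → B ∩ (M.E \ F) = B \ F := by
    intro B hBE
    ext x
    exact ⟨fun ⟨h1, h2⟩ => ⟨h1, h2.2⟩, fun ⟨h1, h2⟩ => ⟨h1, hBE h1, h2⟩⟩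
  constructor
  · rintro ⟨hB, hall⟩
    have hBF := hall F hF
    refine ⟨⟨hBF, fun G hG => hall G (Finset.mem_of_mem_erase hG)⟩, ?_, hB.subset_ground⟩
    rw [hBiF B hB.subset_ground]
    exact (contract_base_iff hE hFE hB.subset_ground hBF).mp hB
  · rintro ⟨⟨hBF, herase⟩, hcb, hBE⟩
    rw [hBiF B hBE] at hcb
    have hB : M.IsBase B := (contract_base_iff hE hFE hBE hBF).mpr hcb
    refine ⟨hB, fun G hG => ?_⟩
    rcases eq_or_ne G F with rfl | hne
    · exact hBF
    · exact herase G (Finset.mem_erase.mpr ⟨hne, hG⟩)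

lemma flat_iff_closure_self (hFE : F ⊆ M.E) : M.IsFlat F ↔ M.closure F = F := by
  refine ⟨Matroid.IsFlat.closure, fun h => ⟨fun I X hIF hIX => ?_, hFE⟩⟩
  have h1 : X ⊆ M.closure I := hIX.subset_closure
  rwa [hIF.closure_eq_closure, h] at h1

lemma restrict_closure_inter (hFE : F ⊆ M.E) (hG : G ⊆ F) :
    (M.restrict F).closure G = M.closure G ∩ F := by
  obtain ⟨I, hI⟩ := M.exists_isBasis G (hG.trans hFE)
  have hIr : (M.restrict F).IsBasis I G := by
    rw [Matroid.isBasis_restrict_iff hFE]; exact ⟨hI, hG⟩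
  rw [← hIr.closure_eq_closure, ← hI.closure_eq_closure,
    hIr.indep.closure_eq_setOf_isBasis_insert, hI.indep.closure_eq_setOf_isBasis_insert]
  ext x
  simp only [Set.mem_setOf_eq, Set.mem_inter_iff]
  rw [Matroid.isBasis_restrict_iff hFE]
  constructor
  · rintro ⟨h1, h2⟩
    exact ⟨h1, h2 (Set.mem_insert x I)⟩
  · rintro ⟨h1, h2⟩
    exact ⟨h1, Set.insert_subset h2 (hI.subset.trans hG)⟩

lemma flat_restrict_iff (hF : M.IsFlat F) (hG : G ⊆ F) :
    (M.restrict F).IsFlat G ↔ M.IsFlat G := by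
  have hFE := hF.subset_ground
  rw [flat_iff_closure_self (show G ⊆ (M.restrict F).E from hG),
    flat_iff_closure_self (hG.trans hFE), restrict_closure_inter hFE hG]
  have hsub : M.closure G ⊆ F := (M.closure_subset_closure hG).trans hF.closure.subset
  constructor
  · intro h
    rwa [Set.inter_eq_self_of_subset_left hsub] at h
  · intro h
    rw [h]
    exact Set.inter_eq_self_of_subset_left hG

lemma restrict_closure_empty (hFE : F ⊆ M.E) (h0 : M.closure ∅ ⊆ F) :
    (M.restrict F).closure ∅ = M.closure ∅ := by
  rw [restrict_closure_inter hFE (Set.empty_subset F),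
    Set.inter_eq_self_of_subset_left h0]

lemma erase_mem_flagsCirc (hC : C ∈ flagsCirc M) (hF : F ∈ C) (hmax : ∀ G ∈ C, G ⊆ F) :
    C.erase F ∈ flagsCirc (M.restrict F) := by
  obtain ⟨⟨hmem, hchain⟩, hEnot⟩ := hC
  have hFflat := (hmem F hF).1
  have h0F : M.closure ∅ ⊂ F := (hmem F hF).2
  refine ⟨⟨fun G hG => ?_,
    hchain.mono (by simp only [Finset.coe_erase]; exact Set.diff_subset)⟩, ?_⟩
  · have hGC := Finset.mem_of_mem_erase hG
    have hGF : G ⊆ F := hmax G hGC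
    refine ⟨(flat_restrict_iff hFflat hGF).mpr (hmem G hGC).1, ?_⟩
    rw [restrict_closure_empty hFflat.subset_ground h0F.subset]
    exact (hmem G hGC).2
  · show (M.restrict F).E ∉ C.erase F
    rw [Matroid.restrict_ground_eq]
    exact Finset.notMem_erase F C

lemma subset_of_mem_flagsCirc_restrict (hC' : C' ∈ flagsCirc (M.restrict F)) :
    ∀ G ∈ C', G ⊆ F :=
  fun G hG => ((hC'.1.1 G hG).1).subset_ground

lemma not_mem_of_flagsCirc_restrict (hC' : C' ∈ flagsCirc (M.restrict F)) : F ∉ C' := by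
  have := hC'.2
  rwa [Matroid.restrict_ground_eq] at this

lemma insert_mem_flagsCirc (hFflat : M.IsFlat F) (h0F : M.closure ∅ ⊂ F) (hFE : F ≠ M.E)
    (hC' : C' ∈ flagsCirc (M.restrict F)) : insert F C' ∈ flagsCirc M := by
  obtain ⟨⟨hmem, hchain⟩, hnot⟩ := hC'
  have hsub : ∀ G ∈ C', G ⊆ F := fun G hG => ((hmem G hG).1).subset_ground
  refine ⟨⟨fun G hG => ?_, ?_⟩, ?_⟩
  · rcases Finset.mem_insert.mp hG with rfl | hG'
    · exact ⟨hFflat, h0F⟩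
    · have h1 := hmem G hG'
      refine ⟨(flat_restrict_iff hFflat (hsub G hG')).mp h1.1, ?_⟩
      have h2 := h1.2
      rwa [restrict_closure_empty hFflat.subset_ground h0F.subset] at h2
  · rw [Finset.coe_insert]
    exact hchain.insert (fun G hG _ => Or.inr (hsub G hG))
  · intro hmem'
    rcases Finset.mem_insert.mp hmem' with h | h
    · exact hFE h.symm
    · exact hFE (subset_antisymm hFflat.subset_ground (hsub _ h))

lemma triple_iff (hE : M.E.Finite) (hF : F ∈ C) (hmax : ∀ G ∈ C, G ⊆ F) (hFE : F ⊆ M.E)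
    {N' : Matroid α} (hN'E : N'.E = F)
    (hN'B : ∀ B', N'.IsBase B' ↔ (M.restrict F).IsBase B' ∧
      ∀ G ∈ C.erase F, (M.restrict F).IsBasis (B' ∩ G) G)
    (hdis : Disjoint N'.E (contract M F).E) (B : Set α) :
    (Matroid.disjointSum N' (contract M F) hdis).IsBase B ↔
      (M.IsBase B ∧ ∀ G ∈ C, M.IsBasis (B ∩ G) G) := by
  have htrans : ∀ G ∈ C.erase F,
      ((M.restrict F).IsBasis ((B ∩ F) ∩ G) G ↔ M.IsBasis (B ∩ G) G) := by
    intro G hG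
    have hGF : G ⊆ F := hmax G (Finset.mem_of_mem_erase hG)
    rw [Matroid.isBasis_restrict_iff hFE, Set.inter_assoc,
      Set.inter_eq_self_of_subset_right hGF]
    exact ⟨fun h => h.1, fun h => ⟨h, hGF⟩⟩
  rw [Matroid.disjointSum_isBase_iff, hN'E, contract_ground, Set.union_diff_cancel hFE,
    hN'B, Matroid.isBase_restrict_iff hFE, comb hE hF hmax hFE B]
  constructor
  · rintro ⟨⟨h1, h2⟩, h3, h4⟩
    exact ⟨⟨h1, fun G hG => (htrans G hG).mp (h2 G hG)⟩, h3, h4⟩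
  · rintro ⟨⟨h1, h2⟩, h3, h4⟩
    exact ⟨⟨h1, fun G hG => (htrans G hG).mpr (h2 G hG)⟩, h3, h4⟩

lemma exists_flagN : ∀ (n : ℕ) (M : Matroid α), M.E.Finite → ∀ C ∈ flagsCirc M, C.card = n →
    ∃ N : Matroid α, N.E = M.E ∧
      ∀ B, N.IsBase B ↔ M.IsBase B ∧ ∀ G ∈ C, M.IsBasis (B ∩ G) G := by
  intro n
  induction n with
  | zero =>
    intro M hE C hC hcard
    rw [Finset.card_eq_zero] at hcard
    subst hcard
    exact ⟨M, rfl, fun B => by simp⟩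
  | succ n IH =>
    intro M hE C hC hcard
    have hchain := hC.1.2
    have hmem := hC.1.1
    have hne : C.Nonempty := Finset.card_pos.mp (by omega)
    obtain ⟨F, hF, hmax⟩ := exists_max_of_chain hchain hne
    have hFE : F ⊆ M.E := (hmem F hF).1.subset_ground
    obtain ⟨N', hN'E, hN'B⟩ := IH (M.restrict F) (hE.subset hFE) _
      (erase_mem_flagsCirc hC hF hmax)
      (by rw [Finset.card_erase_of_mem hF, hcard]; rfl)
    have hgr : N'.E = F := hN'E
    have hdis : Disjoint N'.E (contract M F).E := by
      rw [hgr, contract_ground]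
      exact Set.disjoint_sdiff_right
    refine ⟨Matroid.disjointSum N' (contract M F) hdis, ?_, ?_⟩
    · rw [Matroid.disjointSum_ground_eq, hgr, contract_ground, Set.union_diff_cancel hFE]
    · exact triple_iff hE hF hmax hFE hgr hN'B hdis

lemma flagMatroid_spec (hE : M.E.Finite) (hC : C ∈ flagsCirc M) :
    (flagMatroid M C).E = M.E ∧
      ∀ B, ((flagMatroid M C).IsBase B ↔ M.IsBase B ∧ ∀ G ∈ C, M.IsBasis (B ∩ G) G) := by
  obtain ⟨N, hN1, hN2⟩ := exists_flagN C.card M hE C hC rfl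
  have hsub : ∀ G ∈ C, G ⊆ M.E := fun G hG => (hC.1.1 G hG).1.subset_ground
  have hchain := hC.1.2
  have hN2' : ∀ B, N.IsBase B ↔ M.IsBase B ∧
      ∑ᶠ e ∈ B, flagWeight C e = wt M (flagWeight C) := by
    intro B
    rw [hN2 B]
    exact and_congr_right fun hB => (base_maxweight_iff hE hsub hchain hB).symm
  have heq : flagMatroid M C = N := initialMatroid_eq _ _ hN1 hN2'
  rw [heq]
  exact ⟨hN1, hN2⟩

lemma flagMatroid_empty (hE : M.E.Finite) : flagMatroid M (∅ : Finset (Set α)) = M := by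
  have h0 : (∅ : Finset (Set α)) ∈ flagsCirc M := by
    refine ⟨⟨by simp, ?_⟩, by simp⟩
    simp only [Finset.coe_empty]
    intro a ha
    exact absurd ha (Set.notMem_empty a)
  obtain ⟨h1, h2⟩ := flagMatroid_spec hE h0
  exact Matroid.ext_isBase h1 (fun ⦃B⦄ _ => (h2 B).trans (by simp))

lemma flagMatroid_eq_disjointSum (hE : M.E.Finite) (hC : C ∈ flagsCirc M) (hF : F ∈ C)
    (hmax : ∀ G ∈ C, G ⊆ F)
    (hdis : Disjoint (flagMatroid (M.restrict F) (C.erase F)).E (contract M F).E) :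
    flagMatroid M C =
      Matroid.disjointSum (flagMatroid (M.restrict F) (C.erase F)) (contract M F) hdis := by
  have hFE : F ⊆ M.E := (hC.1.1 F hF).1.subset_ground
  obtain ⟨hN'E, hN'B⟩ := flagMatroid_spec (M := M.restrict F) (hE.subset hFE)
    (erase_mem_flagsCirc hC hF hmax)
  have hgr : (flagMatroid (M.restrict F) (C.erase F)).E = F := hN'E
  obtain ⟨h1, h2⟩ := flagMatroid_spec hE hC
  refine Matroid.ext_isBase ?_ (fun ⦃B⦄ _ => ?_)
  · rw [Matroid.disjointSum_ground_eq, h1, hgr, contract_ground,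
      Set.union_diff_cancel hFE]
  · rw [h2 B, triple_iff hE hF hmax hFE hgr hN'B hdis]

end Flags

section Poly

variable {M : Matroid α} {E S : Set α}

lemma finsum_mem_subsets {β : Type*} [AddCommMonoid β] (hE : E.Finite) (f : Set α → β) :
    ∑ᶠ S ∈ {S : Set α | S ⊆ E}, f S = ∑ T ∈ hE.toFinset.powerset, f ↑T := by
  have himg : {S : Set α | S ⊆ E} =
      ↑(hE.toFinset.powerset.image (fun T : Finset α => (T : Set α))) := by
    ext S
    simp only [Finset.coe_image, Set.mem_image, Finset.mem_coe, Finset.mem_powerset,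
      Set.mem_setOf_eq]
    constructor
    · intro hS
      have hSfin : S.Finite := hE.subset hS
      refine ⟨hSfin.toFinset, ?_, hSfin.coe_toFinset⟩
      intro x hx
      rw [Set.Finite.mem_toFinset] at hx ⊢
      exact hS hx
    · rintro ⟨T, hT, rfl⟩
      intro x hx
      exact (Set.Finite.mem_toFinset hE).mp (hT hx)
  rw [himg, finsum_mem_coe_finset, Finset.sum_image
    (fun x _ y _ h => Finset.coe_injective h)]

lemma charPoly_eq_sum (hE : M.E.Finite) :
    charPoly M = ∑ T ∈ hE.toFinset.powerset,
      (-1 : ℤ) ^ T.card • (X : Polynomial ℤ) ^ (rk M M.E - rk M ↑T) := by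
  rw [charPoly, finsum_mem_subsets hE]
  exact Finset.sum_congr rfl fun T _ => by rw [Set.ncard_coe_finset]

lemma redCharPoly_eq_sum (hE : M.E.Finite) :
    redCharPoly M = ∑ T ∈ hE.toFinset.powerset,
      (-1 : ℤ) ^ T.card • qAnalogue (rk M M.E - rk M ↑T) := by
  rw [redCharPoly, finsum_mem_subsets hE]
  exact Finset.sum_congr rfl fun T _ => by rw [Set.ncard_coe_finset]

lemma rk_disjointSum {A B : Matroid α} (hdis : Disjoint A.E B.E) (hA : A.E.Finite)
    (hB : B.E.Finite) {S : Set α} (hS : S ⊆ A.E ∪ B.E) :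
    rk (Matroid.disjointSum A B hdis) S = rk A (S ∩ A.E) + rk B (S ∩ B.E) := by
  obtain ⟨I, hI⟩ := A.exists_isBasis (S ∩ A.E) Set.inter_subset_right
  obtain ⟨J, hJ⟩ := B.exists_isBasis (S ∩ B.E) Set.inter_subset_right
  have hIA : I ⊆ A.E := hI.indep.subset_ground
  have hJB : J ⊆ B.E := hJ.indep.subset_ground
  have hIJA : (I ∪ J) ∩ A.E = I := by
    rw [Set.union_inter_distrib_right, Set.inter_eq_self_of_subset_left hIA,
      (hdis.symm.mono_left hJB).inter_eq, Set.union_empty]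
  have hIJB : (I ∪ J) ∩ B.E = J := by
    rw [Set.union_inter_distrib_right, Set.inter_eq_self_of_subset_left hJB,
      (hdis.mono_left hIA).inter_eq, Set.empty_union]
  have hind : (Matroid.disjointSum A B hdis).Indep (I ∪ J) := by
    rw [Matroid.disjointSum_indep_iff, hIJA, hIJB]
    exact ⟨hI.indep, hJ.indep, Set.union_subset (hIA.trans Set.subset_union_left)
      (hJB.trans Set.subset_union_right)⟩
  have hSE : S ⊆ (Matroid.disjointSum A B hdis).E := by
    rw [Matroid.disjointSum_ground_eq]; exact hS
  have hbasis : (Matroid.disjointSum A B hdis).IsBasis (I ∪ J) S := by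
    rw [Matroid.isBasis_iff hSE]
    refine ⟨hind, Set.union_subset (hI.subset.trans Set.inter_subset_left)
      (hJ.subset.trans Set.inter_subset_left), ?_⟩
    intro K hK hIJK hKS
    rw [Matroid.disjointSum_indep_iff] at hK
    obtain ⟨hKA, hKB, hKE⟩ := hK
    have e1 : K ∩ A.E = I :=
      (hI.eq_of_subset_indep hKA (by rw [← hIJA]; exact Set.inter_subset_inter_left _ hIJK)
        (Set.inter_subset_inter_left _ hKS)).symm
    have e2 : K ∩ B.E = J :=
      (hJ.eq_of_subset_indep hKB (by rw [← hIJB]; exact Set.inter_subset_inter_left _ hIJK)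
        (Set.inter_subset_inter_left _ hKS)).symm
    calc I ∪ J = (K ∩ A.E) ∪ (K ∩ B.E) := by rw [e1, e2]
      _ = K ∩ (A.E ∪ B.E) := by rw [Set.inter_union_distrib_left]
      _ = K := Set.inter_eq_self_of_subset_left hKE
  have hgfin : (Matroid.disjointSum A B hdis).E.Finite := by
    rw [Matroid.disjointSum_ground_eq]; exact hA.union hB
  rw [rk_eq_of_basis hgfin hbasis, rk_eq_of_basis hA hI, rk_eq_of_basis hB hJ]
  exact Set.ncard_union_eq (hdis.mono hIA hJB) (hA.subset hIA) (hB.subset hJB)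

lemma charPoly_disjointSum {A B : Matroid α} (hdis : Disjoint A.E B.E) (hA : A.E.Finite)
    (hB : B.E.Finite) :
    charPoly (Matroid.disjointSum A B hdis) = charPoly A * charPoly B := by
  have hU : (Matroid.disjointSum A B hdis).E.Finite := by
    rw [Matroid.disjointSum_ground_eq]; exact hA.union hB
  have htoF : hU.toFinset = hA.toFinset ∪ hB.toFinset := by
    ext x
    simp [Matroid.disjointSum_ground_eq]
  have hdisF : Disjoint hA.toFinset hB.toFinset := by
    rw [Finset.disjoint_left]
    intro x hx hx'
    rw [Set.Finite.mem_toFinset] at hx hx'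
    exact (hdis.le_bot ⟨hx, hx'⟩ : x ∈ (∅ : Set α))
  have hrkg : rk (Matroid.disjointSum A B hdis) (Matroid.disjointSum A B hdis).E =
      rk A A.E + rk B B.E := by
    rw [Matroid.disjointSum_ground_eq,
      rk_disjointSum hdis hA hB subset_rfl, Set.union_inter_cancel_left,
      Set.union_inter_cancel_right]
  rw [charPoly_eq_sum hU, charPoly_eq_sum hA, charPoly_eq_sum hB, Finset.sum_mul_sum,
    htoF]
  rw [← Finset.sum_product']
  refine Finset.sum_nbij' (fun T => (T ∩ hA.toFinset, T ∩ hB.toFinset))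
    (fun p => p.1 ∪ p.2) ?_ ?_ ?_ ?_ ?_
  · intro T hT
    rw [Finset.mem_powerset] at hT
    rw [Finset.mem_product]
    exact ⟨Finset.mem_powerset.mpr Finset.inter_subset_right,
      Finset.mem_powerset.mpr Finset.inter_subset_right⟩
  · intro p hp
    rw [Finset.mem_product] at hp
    rw [Finset.mem_powerset]
    exact Finset.union_subset_union (Finset.mem_powerset.mp hp.1) (Finset.mem_powerset.mp hp.2)
  · intro T hT
    rw [Finset.mem_powerset] at hT
    show T ∩ hA.toFinset ∪ T ∩ hB.toFinset = T
    rw [← Finset.inter_union_distrib_left]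
    exact Finset.inter_eq_left.mpr hT
  · rintro ⟨p1, p2⟩ hp
    rw [Finset.mem_product, Finset.mem_powerset, Finset.mem_powerset] at hp
    obtain ⟨h1, h2⟩ := hp
    show ((p1 ∪ p2) ∩ hA.toFinset, (p1 ∪ p2) ∩ hB.toFinset) = (p1, p2)
    have e1 : p2 ∩ hA.toFinset = ∅ := Finset.eq_empty_of_forall_notMem fun x hx =>
      (Finset.disjoint_left.mp hdisF) (Finset.mem_inter.mp hx).2
        (h2 (Finset.mem_inter.mp hx).1) |>.elim
    have e2 : p1 ∩ hB.toFinset = ∅ := Finset.eq_empty_of_forall_notMem fun x hx =>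
      (Finset.disjoint_left.mp hdisF (h1 (Finset.mem_inter.mp hx).1)
        (Finset.mem_inter.mp hx).2).elim
    have e3 : (p1 ∪ p2) ∩ hA.toFinset = p1 := by
      rw [Finset.union_inter_distrib_right, Finset.inter_eq_left.mpr h1, e1,
        Finset.union_empty]
    have h4 : (p1 ∪ p2) ∩ hB.toFinset = p2 := by
      rw [Finset.union_inter_distrib_right, Finset.inter_eq_left.mpr h2, e2,
        Finset.empty_union]
    rw [Prod.mk.injEq]
    exact ⟨e3, h4⟩
  · intro T hT
    rw [Finset.mem_powerset] at hT
    have hTA : ((T ∩ hA.toFinset : Finset α) : Set α) = ↑T ∩ A.E := by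
      push_cast
      rw [Set.Finite.coe_toFinset]
    have hTB : ((T ∩ hB.toFinset : Finset α) : Set α) = ↑T ∩ B.E := by
      push_cast
      rw [Set.Finite.coe_toFinset]
    have hTsub : (T : Set α) ⊆ A.E ∪ B.E := by
      intro x hx
      have := hT hx
      rw [Finset.mem_union, Set.Finite.mem_toFinset, Set.Finite.mem_toFinset] at this
      exact this
    have hcard : T.card = (T ∩ hA.toFinset).card + (T ∩ hB.toFinset).card := by
      rw [← Finset.card_union_of_disjoint
        (hdisF.mono Finset.inter_subset_right Finset.inter_subset_right),
        ← Finset.inter_union_distrib_left, Finset.inter_eq_left.mpr hT]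
    have hrkT : rk (Matroid.disjointSum A B hdis) ↑T =
        rk A ↑(T ∩ hA.toFinset) + rk B ↑(T ∩ hB.toFinset) := by
      rw [hTA, hTB]
      exact rk_disjointSum hdis hA hB hTsub
    have hb1 : rk A ↑(T ∩ hA.toFinset) ≤ rk A A.E := rk_le_rk_ground hA _
    have hb2 : rk B ↑(T ∩ hB.toFinset) ≤ rk B B.E := rk_le_rk_ground hB _
    have hexp : rk (Matroid.disjointSum A B hdis) (Matroid.disjointSum A B hdis).E -
        rk (Matroid.disjointSum A B hdis) ↑T =
        (rk A A.E - rk A ↑(T ∩ hA.toFinset)) + (rk B B.E - rk B ↑(T ∩ hB.toFinset)) := by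
      rw [hrkg, hrkT]; omega
    rw [hexp, hcard, pow_add, pow_add, smul_mul_smul_comm]

lemma X_sub_one_mul_qAnalogue (n : ℕ) :
    (X - 1 : Polynomial ℤ) * qAnalogue n = X ^ n - 1 := by
  rw [qAnalogue, mul_comm, geom_sum_mul]

lemma X_sub_one_mul_redCharPoly (hE : M.E.Finite) (hne : M.E.Nonempty) :
    (X - 1 : Polynomial ℤ) * redCharPoly M = charPoly M := by
  rw [redCharPoly_eq_sum hE, charPoly_eq_sum hE, Finset.mul_sum]
  have h1 : ∀ T ∈ hE.toFinset.powerset,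
      (X - 1 : Polynomial ℤ) * ((-1 : ℤ) ^ T.card • qAnalogue (rk M M.E - rk M ↑T)) =
      (-1 : ℤ) ^ T.card • (X : Polynomial ℤ) ^ (rk M M.E - rk M ↑T) -
        (-1 : ℤ) ^ T.card • (1 : Polynomial ℤ) := by
    intro T _
    rw [mul_smul_comm, X_sub_one_mul_qAnalogue, smul_sub]
  rw [Finset.sum_congr rfl h1, Finset.sum_sub_distrib, ← Finset.sum_smul]
  have h2 : (∑ T ∈ hE.toFinset.powerset, (-1 : ℤ) ^ T.card) = 0 := by
    apply Finset.sum_powerset_neg_one_pow_card_of_nonempty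
    obtain ⟨x, hx⟩ := hne
    exact ⟨x, (Set.Finite.mem_toFinset hE).mpr hx⟩
  rw [h2, zero_smul, sub_zero]

end Poly

section Key

variable {M : Matroid α} {C C' : Finset (Set α)} {F : Set α}

lemma empty_mem_flagsCirc (M : Matroid α) : (∅ : Finset (Set α)) ∈ flagsCirc M := by
  refine ⟨⟨by simp, ?_⟩, by simp⟩
  simp only [Finset.coe_empty]
  intro a ha
  exact absurd ha (Set.notMem_empty a)

lemma key_red (hE : M.E.Finite) (hC : C ∈ flagsCirc M) (hF : F ∈ C)
    (hmax : ∀ G ∈ C, G ⊆ F) :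
    redCharPoly (flagMatroid M C) = (X - 1) *
      (redCharPoly (contract M F) *
        redCharPoly (flagMatroid (M.restrict F) (C.erase F))) := by
  have hFflat := (hC.1.1 F hF).1
  have hFE : F ⊆ M.E := hFflat.subset_ground
  have h0F : M.closure ∅ ⊂ F := (hC.1.1 F hF).2
  obtain ⟨x, hxF, -⟩ := Set.exists_of_ssubset h0F
  have hFne : F.Nonempty := ⟨x, hxF⟩
  have hFneqE : F ≠ M.E := fun h => hC.2 (h ▸ hF)
  have hEFne : (M.E \ F).Nonempty :=
    Set.diff_nonempty.mpr (fun h => hFneqE (subset_antisymm hFE h))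
  obtain ⟨hgr', -⟩ := flagMatroid_spec (M := M.restrict F) (hE.subset hFE)
    (erase_mem_flagsCirc hC hF hmax)
  have hgr'F : (flagMatroid (M.restrict F) (C.erase F)).E = F := hgr'
  have hdis : Disjoint (flagMatroid (M.restrict F) (C.erase F)).E (contract M F).E := by
    rw [hgr'F, contract_ground]
    exact Set.disjoint_sdiff_right
  have hdecomp := flagMatroid_eq_disjointSum hE hC hF hmax hdis
  obtain ⟨hgrC, -⟩ := flagMatroid_spec hE hC
  have hEne : M.E.Nonempty := ⟨x, hFE hxF⟩
  have hfin1 : (flagMatroid M C).E.Finite := hgrC ▸ hE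
  have hne1 : (flagMatroid M C).E.Nonempty := hgrC ▸ hEne
  have hfin2 : (flagMatroid (M.restrict F) (C.erase F)).E.Finite := by
    rw [hgr'F]; exact hE.subset hFE
  have hne2 : (flagMatroid (M.restrict F) (C.erase F)).E.Nonempty := by
    rw [hgr'F]; exact hFne
  have hfin3 : (contract M F).E.Finite := by
    rw [contract_ground]; exact hE.subset Set.diff_subset
  have hne3 : (contract M F).E.Nonempty := by rw [contract_ground]; exact hEFne
  have hXne : (X - 1 : Polynomial ℤ) ≠ 0 := by
    have : (X - 1 : Polynomial ℤ) = X - Polynomial.C 1 := by rw [map_one]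
    rw [this]
    exact Polynomial.X_sub_C_ne_zero (1 : ℤ)
  apply mul_left_cancel₀ hXne
  rw [X_sub_one_mul_redCharPoly hfin1 hne1, hdecomp,
    charPoly_disjointSum hdis hfin2 hfin3,
    ← X_sub_one_mul_redCharPoly hfin2 hne2, ← X_sub_one_mul_redCharPoly hfin3 hne3]
  ring

lemma monic_X_sub_one_pow (k : ℕ) : ((X - 1 : Polynomial ℤ) ^ k).Monic := by
  have h1 : (X - 1 : Polynomial ℤ) = X - Polynomial.C 1 := by rw [map_one]
  rw [h1]
  exact (Polynomial.monic_X_sub_C (1 : ℤ)).pow k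

lemma div_red : ∀ (n : ℕ) (M : Matroid α), M.E.Finite → ∀ C ∈ flagsCirc M, C.card = n →
    ∃ g, redCharPoly (flagMatroid M C) = (X - 1) ^ C.card * g := by
  intro n
  induction n with
  | zero =>
    intro M hE C hC hcard
    rw [Finset.card_eq_zero] at hcard
    subst hcard
    exact ⟨redCharPoly M, by rw [flagMatroid_empty hE, Finset.card_empty, pow_zero, one_mul]⟩
  | succ n IH =>
    intro M hE C hC hcard
    have hchain := hC.1.2
    have hne : C.Nonempty := Finset.card_pos.mp (by omega)
    obtain ⟨F, hF, hmax⟩ := exists_max_of_chain hchain hne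
    have hFE : F ⊆ M.E := (hC.1.1 F hF).1.subset_ground
    obtain ⟨g, hg⟩ := IH (M.restrict F) (hE.subset hFE) _ (erase_mem_flagsCirc hC hF hmax)
      (by rw [Finset.card_erase_of_mem hF, hcard]; rfl)
    refine ⟨redCharPoly (contract M F) * g, ?_⟩
    rw [key_red hE hC hF hmax, hg, ← Finset.card_erase_add_one hF, pow_succ]
    ring

lemma term_eq (hE : M.E.Finite) (hC : C ∈ flagsCirc M) (hF : F ∈ C)
    (hmax : ∀ G ∈ C, G ⊆ F) :
    redCharPoly (flagMatroid M C) /ₘ ((X - 1) ^ C.card) =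
      redCharPoly (contract M F) *
        (redCharPoly (flagMatroid (M.restrict F) (C.erase F)) /ₘ
          ((X - 1) ^ (C.erase F).card)) := by
  have hFE : F ⊆ M.E := (hC.1.1 F hF).1.subset_ground
  obtain ⟨g, hg⟩ := div_red (C.erase F).card (M.restrict F) (hE.subset hFE) _
    (erase_mem_flagsCirc hC hF hmax) rfl
  have h2 : redCharPoly (flagMatroid M C) =
      (X - 1) ^ C.card * (redCharPoly (contract M F) * g) := by
    rw [key_red hE hC hF hmax, hg, ← Finset.card_erase_add_one hF, pow_succ]
    ring
  rw [h2, hg, Polynomial.mul_divByMonic_cancel_left _ (monic_X_sub_one_pow _),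
    Polynomial.mul_divByMonic_cancel_left _ (monic_X_sub_one_pow _)]

lemma flagsCirc_finite (hE : M.E.Finite) : (flagsCirc M).Finite := by
  have h2 : {t : Set (Set α) | t ⊆ {S : Set α | S ⊆ M.E}}.Finite :=
    hE.finite_subsets.finite_subsets
  have hsub : flagsCirc M ⊆
      (fun C : Finset (Set α) => (C : Set (Set α))) ⁻¹' {t | t ⊆ {S | S ⊆ M.E}} := by
    intro C hC G hG
    exact (hC.1.1 G hG).1.subset_ground
  exact (h2.preimage (Set.injOn_of_injective Finset.coe_injective)).subset hsub

lemma Pbar_eq_sum (hE : M.E.Finite) : Pbar M = ∑ C ∈ (flagsCirc_finite hE).toFinset,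
    redCharPoly (flagMatroid M C) /ₘ ((X - 1) ^ C.card) := by
  rw [Pbar, finsum_mem_eq_finite_toFinset_sum _ (flagsCirc_finite hE)]

end Key

theorem Pbar_recursion (M : Matroid α) (hE : M.E.Finite) :
    Pbar M = redCharPoly M +
      ∑ᶠ F ∈ {F : Set α | M.IsFlat F ∧ M.closure ∅ ⊂ F ∧ F ≠ M.E},
        redCharPoly (contract M F) * Pbar (M.restrict F) := by
  classical
  have hLfin : {F : Set α | M.IsFlat F ∧ M.closure ∅ ⊂ F ∧ F ≠ M.E}.Finite :=
    hE.finite_subsets.subset (fun F hF => hF.1.subset_ground)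
  rw [Pbar_eq_sum hE, finsum_mem_eq_finite_toFinset_sum _ hLfin]
  have hemp : ∅ ∈ (flagsCirc_finite hE).toFinset :=
    (Set.Finite.mem_toFinset _).mpr (empty_mem_flagsCirc M)
  rw [← Finset.add_sum_erase _ _ hemp]
  congr 1
  · rw [flagMatroid_empty hE, Finset.card_empty, pow_zero, Polynomial.divByMonic_one]
  have hmaps : ∀ C ∈ ((flagsCirc_finite hE).toFinset).erase ∅,
      (⋃₀ (C : Set (Set α))) ∈ hLfin.toFinset := by
    intro C hC
    obtain ⟨hCne, hCmem⟩ := Finset.mem_erase.mp hC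
    have hCflag : C ∈ flagsCirc M := (Set.Finite.mem_toFinset _).mp hCmem
    have hne : C.Nonempty := Finset.nonempty_iff_ne_empty.mpr hCne
    obtain ⟨F, hF, hmax⟩ := exists_max_of_chain hCflag.1.2 hne
    rw [sUnion_eq_max hF hmax, Set.Finite.mem_toFinset]
    exact ⟨(hCflag.1.1 F hF).1, (hCflag.1.1 F hF).2, fun h => hCflag.2 (h ▸ hF)⟩
  rw [← Finset.sum_fiberwise_of_maps_to hmaps]
  refine Finset.sum_congr rfl fun F hFL => ?_
  rw [Set.Finite.mem_toFinset] at hFL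
  obtain ⟨hFflat, h0F, hFneqE⟩ := hFL
  have hFE : F ⊆ M.E := hFflat.subset_ground
  have hFfin : (M.restrict F).E.Finite := hE.subset hFE
  rw [Pbar_eq_sum (M := M.restrict F) hFfin, Finset.mul_sum]
  refine Finset.sum_nbij' (fun C => C.erase F) (fun C' => insert F C') ?_ ?_ ?_ ?_ ?_
  · intro C hCf
    obtain ⟨hC1, hsU⟩ := Finset.mem_filter.mp hCf
    obtain ⟨hCne, hCmem⟩ := Finset.mem_erase.mp hC1
    have hCflag : C ∈ flagsCirc M := (Set.Finite.mem_toFinset _).mp hCmem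
    have hne : C.Nonempty := Finset.nonempty_iff_ne_empty.mpr hCne
    obtain ⟨F', hF', hmax'⟩ := exists_max_of_chain hCflag.1.2 hne
    have hFF' : F' = F := by rw [← sUnion_eq_max hF' hmax']; exact hsU
    subst hFF'
    rw [Set.Finite.mem_toFinset]
    exact erase_mem_flagsCirc hCflag hF' hmax'
  · intro C' hC'
    rw [Set.Finite.mem_toFinset] at hC'
    have hflag := insert_mem_flagsCirc hFflat h0F hFneqE hC'
    have hsub : ∀ G ∈ C', G ⊆ F := subset_of_mem_flagsCirc_restrict hC'
    have hFins : F ∈ insert F C' := Finset.mem_insert_self F C'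
    have hmaxins : ∀ G ∈ insert F C', G ⊆ F := by
      intro G hG
      rcases Finset.mem_insert.mp hG with rfl | hG'
      · exact subset_rfl
      · exact hsub G hG'
    refine Finset.mem_filter.mpr ⟨Finset.mem_erase.mpr ⟨?_, ?_⟩, ?_⟩
    · exact Finset.nonempty_iff_ne_empty.mp ⟨F, hFins⟩
    · exact (Set.Finite.mem_toFinset _).mpr hflag
    · exact sUnion_eq_max hFins hmaxins
  · intro C hCf
    obtain ⟨hC1, hsU⟩ := Finset.mem_filter.mp hCf
    obtain ⟨hCne, hCmem⟩ := Finset.mem_erase.mp hC1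
    have hCflag : C ∈ flagsCirc M := (Set.Finite.mem_toFinset _).mp hCmem
    have hne : C.Nonempty := Finset.nonempty_iff_ne_empty.mpr hCne
    obtain ⟨F', hF', hmax'⟩ := exists_max_of_chain hCflag.1.2 hne
    have hFF' : F' = F := by rw [← sUnion_eq_max hF' hmax']; exact hsU
    subst hFF'
    exact Finset.insert_erase hF'
  · intro C' hC'
    rw [Set.Finite.mem_toFinset] at hC'
    exact Finset.erase_insert (not_mem_of_flagsCirc_restrict hC')
  · intro C hCf
    obtain ⟨hC1, hsU⟩ := Finset.mem_filter.mp hCf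
    obtain ⟨hCne, hCmem⟩ := Finset.mem_erase.mp hC1
    have hCflag : C ∈ flagsCirc M := (Set.Finite.mem_toFinset _).mp hCmem
    have hne : C.Nonempty := Finset.nonempty_iff_ne_empty.mpr hCne
    obtain ⟨F', hF', hmax'⟩ := exists_max_of_chain hCflag.1.2 hne
    have hFF' : F' = F := by rw [← sUnion_eq_max hF' hmax']; exact hsU
    subst hFF'
    exact term_eq hE hCflag hF' hmax'

end MatroidZeta
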